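/- Let U ⊆ ℝ^n be open and convex, and let E : U × ℝ → ℝ be a convex function of (q, η) that is continuously differentiable and strictly increasing in η (∂E/∂η > 0 everywhere). Suppose that for each q the map η ↦ E(q, η) is a bijection onto an interval, and define η = h(q, Ê) implicitly by E(q, h(q, Ê)) = Ê. Then the function (q, Ê) ↦ −h(q, Ê) is convex on its (convex) domain. -/
import Mathlib


/-- Inverting a jointly convex function, continuously differentiable and strictly increasing in
its last variable (with interval range in that variable), yields that `−h` is convex, where
`h(q, Ê)` is defined implicitly by `E(q, h(q, Ê)) = Ê`. -/
theorem neg_partial_inverse_convex (n : ℕ) (U : Set (Fin n → ℝ))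
    (hUopen : IsOpen U) (hUconv : Convex ℝ U)
    (E : (Fin n → ℝ) × ℝ → ℝ)
    (hconv : ConvexOn ℝ (U ×ˢ (Set.univ : Set ℝ)) E)
    (hC1 : ContDiffOn ℝ 1 E (U ×ˢ (Set.univ : Set ℝ)))
    (hmono : ∀ q ∈ U, ∀ η : ℝ, 0 < deriv (fun t => E (q, t)) η)
    (hbij : ∀ q ∈ U, Function.Injective (fun η : ℝ => E (q, η)) ∧
      (Set.range fun η : ℝ => E (q, η)).OrdConnected)
    (h : (Fin n → ℝ) × ℝ → ℝ)
    (hinv : ∀ p : (Fin n → ℝ) × ℝ, p.1 ∈ U → p.2 ∈ (Set.range fun η : ℝ => E (p.1, η)) →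
      E (p.1, h p) = p.2) :
    ConvexOn ℝ {p : (Fin n → ℝ) × ℝ | p.1 ∈ U ∧ p.2 ∈ Set.range fun η : ℝ => E (p.1, η)}
      (fun p => -h p) := by
  -- For each `q ∈ U`, the map `t ↦ E (q, t)` is convex on `ℝ`.
  have hfconv : ∀ q ∈ U, ConvexOn ℝ (Set.univ : Set ℝ) (fun t => E (q, t)) := by
    intro q hq
    refine ⟨convex_univ, ?_⟩
    intro s _ t _ a b ha hb hab
    have := hconv.2 (x := (q, s)) (y := (q, t)) ⟨hq, Set.mem_univ _⟩ ⟨hq, Set.mem_univ _⟩ ha hb hab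
    have hq' : a • q + b • q = q := by rw [← add_smul, hab, one_smul]
    have heq : a • ((q, s) : (Fin n → ℝ) × ℝ) + b • (q, t) = (q, a • s + b • t) := by
      simp [Prod.smul_def, Prod.ext_iff, hq']
    rwa [heq] at this
  -- For each `q ∈ U`, the map `t ↦ E (q, t)` is strictly monotone.
  have hfmono : ∀ q ∈ U, StrictMono (fun t => E (q, t)) := fun q hq =>
    strictMono_of_deriv_pos (hmono q hq)
  -- Reachability: anything above a value of `t ↦ E (q, t)` is in its range.
  have hreach : ∀ q ∈ U, ∀ η e : ℝ, E (q, η) ≤ e →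
      e ∈ Set.range (fun t : ℝ => E (q, t)) := by
    intro q hq η e hle
    set f : ℝ → ℝ := fun t => E (q, t) with hf
    have hs : 0 < f (η + 1) - f η := by
      have := hfmono q hq (show η < η + 1 by linarith)
      simpa [f] using sub_pos.mpr this
    set s : ℝ := f (η + 1) - f η with hsdef
    set t : ℝ := (η + 1) + max 1 ((e - f (η + 1)) / s) with ht
    have htb : η + 1 < t := by
      have : (1 : ℝ) ≤ max 1 ((e - f (η + 1)) / s) := le_max_left _ _
      simp only [ht]; linarith
    have hslope := (hfconv q hq).slope_mono_adjacent (Set.mem_univ η) (Set.mem_univ t)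
      (show η < η + 1 by linarith) htb
    have hden : (0 : ℝ) < t - (η + 1) := by linarith
    have h1 : (f (η + 1) - f η) / ((η + 1) - η) = s := by
      simp [hsdef]
    rw [h1, le_div_iff₀ hden] at hslope
    have h2 : s * (t - (η + 1)) ≥ e - f (η + 1) := by
      have : t - (η + 1) = max 1 ((e - f (η + 1)) / s) := by rw [ht]; ring
      rw [this]
      calc e - f (η + 1) = s * ((e - f (η + 1)) / s) := by field_simp
        _ ≤ s * max 1 ((e - f (η + 1)) / s) :=
            mul_le_mul_of_nonneg_left (le_max_right _ _) hs.le
    have hft : e ≤ f t := by linarith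
    have hmem := (hbij q hq).2.out (Set.mem_range_self η) (Set.mem_range_self t)
      (show e ∈ Set.Icc (f η) (f t) from ⟨hle, hft⟩)
    exact hmem
  -- The main combined estimate.
  have key : ∀ p1 ∈ {p : (Fin n → ℝ) × ℝ | p.1 ∈ U ∧ p.2 ∈ Set.range fun η : ℝ => E (p.1, η)},
      ∀ p2 ∈ {p : (Fin n → ℝ) × ℝ | p.1 ∈ U ∧ p.2 ∈ Set.range fun η : ℝ => E (p.1, η)},
      ∀ a b : ℝ, 0 ≤ a → 0 ≤ b → a + b = 1 →
      (a • p1 + b • p2) ∈ {p : (Fin n → ℝ) × ℝ | p.1 ∈ U ∧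
          p.2 ∈ Set.range fun η : ℝ => E (p.1, η)} ∧
        -h (a • p1 + b • p2) ≤ a • (-h p1) + b • (-h p2) := by
    intro p1 hp1 p2 hp2 a b ha hb hab
    obtain ⟨hq1, hr1⟩ := hp1
    obtain ⟨hq2, hr2⟩ := hp2
    set η1 := h p1
    set η2 := h p2
    have he1 : E (p1.1, η1) = p1.2 := hinv p1 hq1 hr1
    have he2 : E (p2.1, η2) = p2.2 := hinv p2 hq2 hr2
    set q : Fin n → ℝ := a • p1.1 + b • p2.1 with hqdef
    have hqU : q ∈ U := hUconv hq1 hq2 ha hb hab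
    have hq1' : (a • p1 + b • p2).1 = q := rfl
    have hq2' : (a • p1 + b • p2).2 = a * p1.2 + b * p2.2 := rfl
    -- convexity estimate
    have hEmid : E (q, a * η1 + b * η2) ≤ a * p1.2 + b * p2.2 := by
      have := hconv.2 (x := (p1.1, η1)) (y := (p2.1, η2)) ⟨hq1, Set.mem_univ _⟩
        ⟨hq2, Set.mem_univ _⟩ ha hb hab
      have heq : a • ((p1.1, η1) : (Fin n → ℝ) × ℝ) + b • (p2.1, η2) = (q, a * η1 + b * η2) :=
        rfl
      rw [heq] at this
      calc E (q, a * η1 + b * η2) ≤ a • E (p1.1, η1) + b • E (p2.1, η2) := this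
        _ = a * p1.2 + b * p2.2 := by rw [he1, he2]; rfl
    have hrange : a * p1.2 + b * p2.2 ∈ Set.range (fun t : ℝ => E (q, t)) :=
      hreach q hqU _ _ hEmid
    have hmemD : (a • p1 + b • p2) ∈ {p : (Fin n → ℝ) × ℝ | p.1 ∈ U ∧
        p.2 ∈ Set.range fun η : ℝ => E (p.1, η)} := by
      refine ⟨hqU, ?_⟩
      rw [hq1', hq2']
      exact hrange
    refine ⟨hmemD, ?_⟩
    set η3 := h (a • p1 + b • p2) with hη3
    have he3 : E (q, η3) = a * p1.2 + b * p2.2 := by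
      have := hinv (a • p1 + b • p2) (by rw [hq1']; exact hqU) (by rw [hq1', hq2']; exact hrange)
      rw [hq1'] at this
      rw [this, hq2']
    have hle : E (q, a * η1 + b * η2) ≤ E (q, η3) := by rw [he3]; exact hEmid
    have hη : a * η1 + b * η2 ≤ η3 := ((hfmono q hqU).le_iff_le).mp hle
    simp only [smul_eq_mul]
    linarith
  exact ⟨fun p1 hp1 p2 hp2 a b ha hb hab => (key p1 hp1 p2 hp2 a b ha hb hab).1,
    fun p1 hp1 p2 hp2 a b ha hb hab => (key p1 hp1 p2 hp2 a b ha hb hab).2⟩
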